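/- Let x_1, …, x_n be n real values and let (X_1, …, X_n) be uniformly distributed over all permutations of (x_1, …, x_n). Then X_1, …, X_n are negatively associated. -/

import Mathlib

open MeasureTheory

/-- A function `f` on vectors depends only on coordinates in the set `S`. -/
def VecDependsOn {ι : Type*} (f : (ι → ℝ) → ℝ) (S : Set ι) : Prop :=
  ∀ x y : ι → ℝ, (∀ i ∈ S, x i = y i) → f x = f y

/-- Random variables `X i` are negatively associated: every two monotone increasing
functions defined on disjoint subsets of the variables are negatively correlated. -/
def NegAssoc {Ω ι : Type*} [MeasurableSpace Ω] (μ : Measure Ω) (X : ι → Ω → ℝ) : Prop :=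
  ∀ (S T : Set ι), Disjoint S T →
    ∀ f g : (ι → ℝ) → ℝ, Monotone f → Monotone g → VecDependsOn f S → VecDependsOn g T →
      ∫ ω, f (fun i => X i ω) * g (fun i => X i ω) ∂μ ≤
        (∫ ω, f (fun i => X i ω) ∂μ) * ∫ ω, g (fun i => X i ω) ∂μ

set_option linter.unusedSectionVars false

namespace NAaux

variable {α β : Type} [DecidableEq α] [DecidableEq β]

/-- Extend an equivalence of punctured types to an equivalence sending `m` to `j`. -/
def extEquiv (m : α) (j : β) (e : {a : α // a ≠ m} ≃ {b : β // b ≠ j}) : α ≃ β where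
  toFun a := if h : a = m then j else (e ⟨a, h⟩).1
  invFun b := if h : b = j then m else (e.symm ⟨b, h⟩).1
  left_inv a := by
    by_cases h : a = m
    · simp [h]
    · simp only [dif_neg h]
      rw [dif_neg (e ⟨a, h⟩).2]
      simp
  right_inv b := by
    by_cases h : b = j
    · simp [h]
    · simp only [dif_neg h]
      rw [dif_neg (e.symm ⟨b, h⟩).2]
      simp

lemma extEquiv_self (m : α) (j : β) (e : {a : α // a ≠ m} ≃ {b : β // b ≠ j}) :
    extEquiv m j e m = j := dif_pos rfl

lemma extEquiv_ne (m : α) (j : β) (e : {a : α // a ≠ m} ≃ {b : β // b ≠ j})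
    {a : α} (h : a ≠ m) : extEquiv m j e a = (e ⟨a, h⟩).1 := dif_neg h

/-- Restrict an equivalence with `e m = j` to punctured types. -/
def restrictEquiv (m : α) (j : β) (e : α ≃ β) (he : e m = j) :
    {a : α // a ≠ m} ≃ {b : β // b ≠ j} :=
  Equiv.subtypeEquiv e (fun a => not_congr
    ⟨fun h => by rw [h, he], fun h => e.injective (by rw [he, h])⟩)

lemma restrictEquiv_apply (m : α) (j : β) (e : α ≃ β) (he : e m = j)
    (a : {a : α // a ≠ m}) : (restrictEquiv m j e he a : β) = e a.1 := rfl

variable [Fintype α] [Fintype β]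

lemma sum_fiber_eq (m : α) (j : β) (H : (α ≃ β) → ℝ) :
    ∑ e ∈ Finset.univ.filter (fun e : α ≃ β => e m = j), H e
      = ∑ e' : ({a : α // a ≠ m} ≃ {b : β // b ≠ j}), H (extEquiv m j e') := by
  refine Finset.sum_bij' (fun e he => restrictEquiv m j e (by simpa using he))
    (fun e' _ => extEquiv m j e') (fun _ _ => Finset.mem_univ _)
    (fun e' _ => by simp [extEquiv_self]) ?_ ?_ ?_
  · intro e he
    have he' : e m = j := by simpa using he
    ext a
    show extEquiv m j (restrictEquiv m j e he') a = e a
    by_cases h : a = m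
    · rw [h, extEquiv_self, ← he']
    · rw [extEquiv_ne _ _ _ h]; rfl
  · intro e' _
    ext a
    show ((restrictEquiv m j (extEquiv m j e') (extEquiv_self m j e')) a : β) = (e' a : β)
    rw [restrictEquiv_apply, extEquiv_ne _ _ _ a.2]
  · intro e he
    have he' : e m = j := by simpa using he
    congr 1
    ext a
    show e a = extEquiv m j (restrictEquiv m j e he') a
    by_cases h : a = m
    · rw [h, extEquiv_self, he']
    · rw [extEquiv_ne _ _ _ h]; rfl

lemma sum_decomp (j : β) (H : (α ≃ β) → ℝ) :
    ∑ e : α ≃ β, H e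
      = ∑ m : α, ∑ e ∈ Finset.univ.filter (fun e : α ≃ β => e m = j), H e := by
  have := Finset.sum_fiberwise_of_maps_to
    (s := (Finset.univ : Finset (α ≃ β))) (t := (Finset.univ : Finset α))
    (g := fun e : α ≃ β => e.symm j) (fun _ _ => Finset.mem_univ _) H
  rw [← this]
  refine Finset.sum_congr rfl fun m _ => Finset.sum_congr ?_ fun _ _ => rfl
  ext e
  simp only [Finset.mem_filter, Finset.mem_univ, true_and]
  constructor
  · rintro rfl; simp
  · rintro rfl; simp


end NAaux

namespace NAaux

variable {α β : Type} [DecidableEq α] [DecidableEq β] [Fintype α] [Fintype β]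

lemma fiber_sum_le (j : β) (y : β → ℝ) (hmax : ∀ b, y b ≤ y j) (S : Set α)
    (f : (α → ℝ) → ℝ) (hf : Monotone f) (hdf : VecDependsOn f S)
    (m m' : α) (hm' : m' ∉ S) :
    ∑ e ∈ Finset.univ.filter (fun e : α ≃ β => e m' = j), f (fun a => y (e a))
      ≤ ∑ e ∈ Finset.univ.filter (fun e : α ≃ β => e m = j), f (fun a => y (e a)) := by
  classical
  have hre : ∑ e ∈ Finset.univ.filter (fun e : α ≃ β => e m = j), f (fun a => y (e a))
      = ∑ e ∈ Finset.univ.filter (fun e : α ≃ β => e m' = j),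
          f (fun a => y (e (Equiv.swap m m' a))) := by
    refine Finset.sum_bij' (fun e _ => (Equiv.swap m m').trans e)
      (fun e _ => (Equiv.swap m m').trans e) ?_ ?_ ?_ ?_ ?_
    · intro e he
      simp only [Finset.mem_filter, Finset.mem_univ, true_and] at he ⊢
      simp [Equiv.swap_apply_right, he]
    · intro e he
      simp only [Finset.mem_filter, Finset.mem_univ, true_and] at he ⊢
      simp [Equiv.swap_apply_left, he]
    · intro e _; ext a; simp
    · intro e _; ext a; simp
    · intro e _
      show f (fun a => y (e a))
        = f (fun a => y (((Equiv.swap m m').trans e) (Equiv.swap m m' a)))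
      congr 1
      funext a
      simp
  rw [hre]
  apply Finset.sum_le_sum
  intro e he
  simp only [Finset.mem_filter, Finset.mem_univ, true_and] at he
  set u : α → ℝ := fun a => y (e a) with hu
  set v : α → ℝ := fun a => y (e (Equiv.swap m m' a)) with hv
  have hSle : ∀ a ∈ S, u a ≤ v a := by
    intro a ha
    have ham' : a ≠ m' := fun h => hm' (h ▸ ha)
    show y (e a) ≤ y (e (Equiv.swap m m' a))
    by_cases ham : a = m
    · subst ham
      rw [Equiv.swap_apply_left, he]
      exact hmax _
    · rw [Equiv.swap_apply_of_ne_of_ne ham ham']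
  calc f u = f (fun a => if a ∈ S then u a else v a) :=
        hdf _ _ (fun i hi => by simp [hi])
    _ ≤ f v := by
        apply hf
        intro a
        by_cases h : a ∈ S
        · simpa [h] using hSle a h
        · simp [h]

lemma const_left (y : β → ℝ) (f g : (α → ℝ) → ℝ) (hconst : ∀ u v, f u = f v) :
    (Fintype.card (α ≃ β) : ℝ) * ∑ e : α ≃ β, f (fun a => y (e a)) * g (fun a => y (e a))
      = (∑ e : α ≃ β, f (fun a => y (e a))) * ∑ e : α ≃ β, g (fun a => y (e a)) := by
  have h1 : ∀ e : α ≃ β, f (fun a => y (e a)) = f (fun _ => 0) := fun e => hconst _ _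
  calc (Fintype.card (α ≃ β) : ℝ) * ∑ e : α ≃ β, f (fun a => y (e a)) * g (fun a => y (e a))
      = (Fintype.card (α ≃ β) : ℝ) * ∑ e : α ≃ β, f (fun _ => 0) * g (fun a => y (e a)) := by
        congr 1; exact Finset.sum_congr rfl fun e _ => by rw [h1]
    _ = (Fintype.card (α ≃ β) : ℝ) * (f (fun _ => 0) * ∑ e : α ≃ β, g (fun a => y (e a))) := by
        rw [← Finset.mul_sum]
    _ = ((Fintype.card (α ≃ β) : ℝ) * f (fun _ => 0)) * ∑ e : α ≃ β, g (fun a => y (e a)) := by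
        ring
    _ = (∑ e : α ≃ β, f (fun a => y (e a))) * ∑ e : α ≃ β, g (fun a => y (e a)) := by
        congr 1
        rw [Finset.sum_congr rfl fun e _ => h1 e, Finset.sum_const, Finset.card_univ,
          nsmul_eq_mul]

lemma const_right (y : β → ℝ) (f g : (α → ℝ) → ℝ) (hconst : ∀ u v, g u = g v) :
    (Fintype.card (α ≃ β) : ℝ) * ∑ e : α ≃ β, f (fun a => y (e a)) * g (fun a => y (e a))
      = (∑ e : α ≃ β, f (fun a => y (e a))) * ∑ e : α ≃ β, g (fun a => y (e a)) := by
  have := const_left y g f hconst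
  calc (Fintype.card (α ≃ β) : ℝ) * ∑ e : α ≃ β, f (fun a => y (e a)) * g (fun a => y (e a))
      = (Fintype.card (α ≃ β) : ℝ) * ∑ e : α ≃ β, g (fun a => y (e a)) * f (fun a => y (e a)) := by
        congr 1; exact Finset.sum_congr rfl fun e _ => mul_comm _ _
    _ = (∑ e : α ≃ β, g (fun a => y (e a))) * ∑ e : α ≃ β, f (fun a => y (e a)) := this
    _ = _ := mul_comm _ _

end NAaux

namespace NAaux

theorem key_comb : ∀ (N : ℕ) (α β : Type) [Fintype α] [DecidableEq α] [Fintype β]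
    [DecidableEq β], Fintype.card α ≤ N → ∀ (y : β → ℝ) (S T : Set α), Disjoint S T →
    ∀ f g : (α → ℝ) → ℝ, Monotone f → Monotone g → VecDependsOn f S → VecDependsOn g T →
    (Fintype.card (α ≃ β) : ℝ) * ∑ e : α ≃ β, f (fun a => y (e a)) * g (fun a => y (e a))
      ≤ (∑ e : α ≃ β, f (fun a => y (e a))) * ∑ e : α ≃ β, g (fun a => y (e a)) := by
  intro N
  induction N with
  | zero =>
    intro α β _ _ _ _ hcard y S T hST f g hf hg hdf hdg
    have hα : IsEmpty α := Fintype.card_eq_zero_iff.mp (le_antisymm hcard (Nat.zero_le _))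
    exact le_of_eq (const_left y f g (fun u v => hdf u v (fun i _ => (hα.false i).elim)))
  | succ N IH =>
    intro α β _ _ _ _ hcard y S T hST f g hf hg hdf hdg
    classical
    by_cases hSne : S.Nonempty
    swap
    · exact le_of_eq (const_left y f g (fun u v => hdf u v
        (fun i hi => absurd ⟨i, hi⟩ hSne)))
    by_cases hTne : T.Nonempty
    swap
    · exact le_of_eq (const_right y f g (fun u v => hdg u v
        (fun i hi => absurd ⟨i, hi⟩ hTne)))
    obtain ⟨s₀, hs₀⟩ := hSne
    obtain ⟨t₀, ht₀⟩ := hTne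
    have hs₀T : s₀ ∉ T := Set.disjoint_left.mp hST hs₀
    have ht₀S : t₀ ∉ S := Set.disjoint_right.mp hST ht₀
    by_cases hc : Fintype.card α = Fintype.card β
    swap
    · have hemp : IsEmpty (α ≃ β) := ⟨fun e => hc (Fintype.card_congr e)⟩
      rw [Finset.univ_eq_empty, Fintype.card_eq_zero]
      simp
    have hαne : Nonempty α := ⟨s₀⟩
    have hn1 : 1 ≤ Fintype.card α := Fintype.card_pos
    have hβne : Nonempty β := by
      rw [← Fintype.card_pos_iff, ← hc]; exact hn1
    obtain ⟨j, -, hmax'⟩ := Finset.exists_max_image (Finset.univ : Finset β) y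
      ⟨Classical.arbitrary β, Finset.mem_univ _⟩
    have hmax : ∀ b, y b ≤ y j := fun b => hmax' b (Finset.mem_univ b)
    set n := Fintype.card α with hn
    set M := (n - 1).factorial with hM
    set A : α → ℝ := fun m =>
      ∑ e ∈ Finset.univ.filter (fun e : α ≃ β => e m = j), f (fun a => y (e a)) with hA
    set B : α → ℝ := fun m =>
      ∑ e ∈ Finset.univ.filter (fun e : α ≃ β => e m = j), g (fun a => y (e a)) with hB
    set C : α → ℝ := fun m =>
      ∑ e ∈ Finset.univ.filter (fun e : α ≃ β => e m = j),
        f (fun a => y (e a)) * g (fun a => y (e a)) with hC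
    have hcard_punct : ∀ m : α, Fintype.card {a : α // a ≠ m} = n - 1 := by
      intro m
      rw [Fintype.card_subtype_compl (· = m), Fintype.card_subtype_eq]
    have hcard_punct' : Fintype.card {b : β // b ≠ j} = n - 1 := by
      rw [Fintype.card_subtype_compl (· = j), Fintype.card_subtype_eq, ← hc]
    have hcard_sub : ∀ m : α,
        Fintype.card ({a : α // a ≠ m} ≃ {b : β // b ≠ j}) = M := by
      intro m
      have hcc : Fintype.card {a : α // a ≠ m} = Fintype.card {b : β // b ≠ j} := by
        rw [hcard_punct m, hcard_punct']
      rw [Fintype.card_equiv (Fintype.equivOfCardEq hcc), hcard_punct m]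
    -- per-fiber induction hypothesis
    have hIH : ∀ m : α, (M : ℝ) * C m ≤ A m * B m := by
      intro m
      set f' : ({a : α // a ≠ m} → ℝ) → ℝ :=
        fun z => f (fun a => if h : a = m then y j else z ⟨a, h⟩) with hf'def
      set g' : ({a : α // a ≠ m} → ℝ) → ℝ :=
        fun z => g (fun a => if h : a = m then y j else z ⟨a, h⟩) with hg'def
      have hf' : Monotone f' := by
        intro z w hzw
        apply hf
        intro a
        dsimp only
        split
        · exact le_rfl
        · exact hzw _
      have hg' : Monotone g' := by
        intro z w hzw
        apply hg
        intro a
        dsimp only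
        split
        · exact le_rfl
        · exact hzw _
      have hdf' : VecDependsOn f' {a : {a : α // a ≠ m} | a.1 ∈ S} := by
        intro z w hzw
        apply hdf
        intro i hi
        split
        · rfl
        · exact hzw _ hi
      have hdg' : VecDependsOn g' {a : {a : α // a ≠ m} | a.1 ∈ T} := by
        intro z w hzw
        apply hdg
        intro i hi
        split
        · rfl
        · exact hzw _ hi
      have hdisj : Disjoint {a : {a : α // a ≠ m} | a.1 ∈ S} {a : {a : α // a ≠ m} | a.1 ∈ T} := by
        rw [Set.disjoint_left]
        intro a haS haT
        exact Set.disjoint_left.mp hST haS haT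
      have hcb : Fintype.card {a : α // a ≠ m} ≤ N := by
        rw [hcard_punct m]
        omega
      have h := IH {a : α // a ≠ m} {b : β // b ≠ j} hcb (fun b => y b.1)
        _ _ hdisj f' g' hf' hg' hdf' hdg'
      have hfe : ∀ e' : {a : α // a ≠ m} ≃ {b : β // b ≠ j},
          f' (fun a => y ((e' a) : β)) = f (fun a => y (extEquiv m j e' a)) := by
        intro e'
        show f (fun a => if h : a = m then y j else y ((e' ⟨a, h⟩ : {b : β // b ≠ j}) : β))
          = f (fun a => y (extEquiv m j e' a))
        apply congrArg
        funext a
        by_cases h : a = m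
        · rw [dif_pos h, h, extEquiv_self]
        · rw [dif_neg h, extEquiv_ne _ _ _ h]
      have hge : ∀ e' : {a : α // a ≠ m} ≃ {b : β // b ≠ j},
          g' (fun a => y ((e' a) : β)) = g (fun a => y (extEquiv m j e' a)) := by
        intro e'
        show g (fun a => if h : a = m then y j else y ((e' ⟨a, h⟩ : {b : β // b ≠ j}) : β))
          = g (fun a => y (extEquiv m j e' a))
        apply congrArg
        funext a
        by_cases h : a = m
        · rw [dif_pos h, h, extEquiv_self]
        · rw [dif_neg h, extEquiv_ne _ _ _ h]
      rw [hA, hB, hC]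
      dsimp only
      rw [sum_fiber_eq m j, sum_fiber_eq m j, sum_fiber_eq m j]
      rw [hcard_sub m] at h
      calc (M : ℝ) * ∑ e' : {a : α // a ≠ m} ≃ {b : β // b ≠ j},
            f (fun a => y (extEquiv m j e' a)) * g (fun a => y (extEquiv m j e' a))
          = (M : ℝ) * ∑ e' : {a : α // a ≠ m} ≃ {b : β // b ≠ j},
            f' (fun a => y ((e' a) : β)) * g' (fun a => y ((e' a) : β)) := by
            congr 1
            exact Finset.sum_congr rfl fun e' _ => by rw [hfe, hge]
        _ ≤ (∑ e' : {a : α // a ≠ m} ≃ {b : β // b ≠ j}, f' (fun a => y ((e' a) : β)))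
            * ∑ e' : {a : α // a ≠ m} ≃ {b : β // b ≠ j}, g' (fun a => y ((e' a) : β)) := h
        _ = _ := by
            congr 1
            · exact Finset.sum_congr rfl fun e' _ => hfe e'
            · exact Finset.sum_congr rfl fun e' _ => hge e'
    -- monotonicity of fiber sums
    have hAle : ∀ m : α, A t₀ ≤ A m := fun m =>
      fiber_sum_le j y hmax S f hf hdf m t₀ ht₀S
    have hBle : ∀ m : α, B s₀ ≤ B m := fun m =>
      fiber_sum_le j y hmax T g hg hdg m s₀ hs₀T
    have hAeq : ∀ m ∉ S, A m = A t₀ := fun m hm =>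
      le_antisymm (fiber_sum_le j y hmax S f hf hdf t₀ m hm) (hAle m)
    have hBeq : ∀ m ∉ T, B m = B s₀ := fun m hm =>
      le_antisymm (fiber_sum_le j y hmax T g hg hdg s₀ m hm) (hBle m)
    -- pointwise product identity
    have hprod : ∀ m : α, A m * B m = A t₀ * B m + A m * B s₀ - A t₀ * B s₀ := by
      intro m
      by_cases hm : m ∈ S
      · rw [hBeq m (Set.disjoint_left.mp hST hm)]; ring
      · rw [hAeq m hm]; ring
    -- global decompositions
    have hdecF : ∑ e : α ≃ β, f (fun a => y (e a)) = ∑ m : α, A m :=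
      sum_decomp j _
    have hdecG : ∑ e : α ≃ β, g (fun a => y (e a)) = ∑ m : α, B m :=
      sum_decomp j _
    have hdecFG : ∑ e : α ≃ β, f (fun a => y (e a)) * g (fun a => y (e a))
        = ∑ m : α, C m := sum_decomp j _
    have hNcard : (Fintype.card (α ≃ β) : ℝ) = (n : ℝ) * (M : ℝ) := by
      rw [Fintype.card_equiv (Fintype.equivOfCardEq hc)]
      rw [← Nat.mul_factorial_pred (show n ≠ 0 by omega)]
      push_cast
      ring
    rw [hdecF, hdecG, hdecFG, hNcard]
    have h1 : (M : ℝ) * ∑ m : α, C m ≤ ∑ m : α, A m * B m := by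
      rw [Finset.mul_sum]
      exact Finset.sum_le_sum fun m _ => hIH m
    have h2 : ∑ m : α, A m * B m
        = A t₀ * ∑ m : α, B m + (∑ m : α, A m) * B s₀ - (n : ℝ) * (A t₀ * B s₀) := by
      rw [Finset.sum_congr rfl fun m _ => hprod m]
      rw [Finset.sum_sub_distrib, Finset.sum_add_distrib, ← Finset.mul_sum, ← Finset.sum_mul,
        Finset.sum_const, Finset.card_univ, nsmul_eq_mul]
    have h3 : (n : ℝ) * A t₀ ≤ ∑ m : α, A m := by
      calc (n : ℝ) * A t₀ = ∑ _m : α, A t₀ := by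
            rw [Finset.sum_const, Finset.card_univ, nsmul_eq_mul]
        _ ≤ ∑ m : α, A m := Finset.sum_le_sum fun m _ => hAle m
    have h4 : (n : ℝ) * B s₀ ≤ ∑ m : α, B m := by
      calc (n : ℝ) * B s₀ = ∑ _m : α, B s₀ := by
            rw [Finset.sum_const, Finset.card_univ, nsmul_eq_mul]
        _ ≤ ∑ m : α, B m := Finset.sum_le_sum fun m _ => hBle m
    have h5 : (n : ℝ) * ((M : ℝ) * ∑ m : α, C m) ≤ (n : ℝ) * ∑ m : α, A m * B m :=
      mul_le_mul_of_nonneg_left h1 (Nat.cast_nonneg n)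
    have h6 : 0 ≤ (∑ m : α, A m - (n : ℝ) * A t₀) * (∑ m : α, B m - (n : ℝ) * B s₀) :=
      mul_nonneg (by linarith) (by linarith)
    nlinarith [h5, h6, h2]

end NAaux


private theorem permutation_distribution_NA'
    {Ω : Type*} [MeasurableSpace Ω] (μ : Measure Ω) [IsProbabilityMeasure μ]
    (n : ℕ) (x : Fin n → ℝ) (σ : Ω → Equiv.Perm (Fin n))
    (hσ : ∀ π : Equiv.Perm (Fin n), μ {ω | σ ω = π} = ((Nat.factorial n : ENNReal))⁻¹)
    (S T : Set (Fin n)) (hST : Disjoint S T)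
    (f g : (Fin n → ℝ) → ℝ) (hf : Monotone f) (hg : Monotone g)
    (hdf : VecDependsOn f S) (hdg : VecDependsOn g T) :
    ∫ ω, f (fun i => x (σ ω i)) * g (fun i => x (σ ω i)) ∂μ ≤
      (∫ ω, f (fun i => x (σ ω i)) ∂μ) * ∫ ω, g (fun i => x (σ ω i)) ∂μ := by
  classical
  -- measurable hulls of the fibers of σ
  have hB : ∀ π : Equiv.Perm (Fin n), ∃ Bs : Set Ω, MeasurableSet Bs ∧
      {ω | σ ω = π} ⊆ Bs ∧ μ Bs = ((Nat.factorial n : ENNReal))⁻¹ ∧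
      μ (Bs \ {ω | σ ω = π}) = 0 := by
    intro π
    set Aset := {ω | σ ω = π} with hAset
    refine ⟨toMeasurable μ Aset, measurableSet_toMeasurable _ _, subset_toMeasurable _ _,
      by rw [measure_toMeasurable, hσ π], ?_⟩
    set Bs := toMeasurable μ Aset with hBs
    set Cs := toMeasurable μ Asetᶜ with hCs
    have hsubC : Asetᶜ ⊆ Cs := subset_toMeasurable _ _
    have hUnion : Bs ∪ Cs = Set.univ := Set.eq_univ_of_univ_subset (by
      rw [← Set.union_compl_self Aset]
      exact Set.union_subset_union (subset_toMeasurable _ _) hsubC)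
    have hCle : μ Cs ≤ ∑ π' ∈ Finset.univ.erase π, ((Nat.factorial n : ENNReal))⁻¹ := by
      rw [hCs, measure_toMeasurable]
      have hsub : Asetᶜ ⊆ ⋃ π' ∈ Finset.univ.erase π, {ω | σ ω = π'} := by
        intro ω hω
        have hne : σ ω ≠ π := hω
        exact Set.mem_biUnion (Finset.mem_erase.mpr ⟨hne, Finset.mem_univ _⟩) rfl
      calc μ Asetᶜ ≤ μ (⋃ π' ∈ Finset.univ.erase π, {ω | σ ω = π'}) := measure_mono hsub
        _ ≤ ∑ π' ∈ Finset.univ.erase π, μ {ω | σ ω = π'} := measure_biUnion_finset_le _ _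
        _ = _ := Finset.sum_congr rfl fun π' _ => hσ π'
    have hsum : ((Nat.factorial n : ENNReal))⁻¹
        + ∑ π' ∈ Finset.univ.erase π, ((Nat.factorial n : ENNReal))⁻¹ = 1 :=
      calc ((Nat.factorial n : ENNReal))⁻¹
            + ∑ π' ∈ Finset.univ.erase π, ((Nat.factorial n : ENNReal))⁻¹
          = ∑ _π' : Equiv.Perm (Fin n), ((Nat.factorial n : ENNReal))⁻¹ :=
            Finset.add_sum_erase Finset.univ
              (fun _ : Equiv.Perm (Fin n) => ((Nat.factorial n : ENNReal))⁻¹)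
              (Finset.mem_univ π)
        _ = 1 := by
            rw [Finset.sum_const, Finset.card_univ, Fintype.card_perm, Fintype.card_fin,
              nsmul_eq_mul]
            exact ENNReal.mul_inv_cancel (by exact_mod_cast (Nat.factorial_pos n).ne')
              (ENNReal.natCast_ne_top _)
    have hBC : μ Bs + μ Cs ≤ 1 := by
      rw [hBs, measure_toMeasurable, hσ π]
      calc ((Nat.factorial n : ENNReal))⁻¹ + μ Cs
          ≤ ((Nat.factorial n : ENNReal))⁻¹
            + ∑ π' ∈ Finset.univ.erase π, ((Nat.factorial n : ENNReal))⁻¹ :=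
            add_le_add le_rfl hCle
        _ = 1 := hsum
    have hinter : μ (Bs ∩ Cs) = 0 := by
      have h1 : μ (Bs ∪ Cs) + μ (Bs ∩ Cs) = μ Bs + μ Cs :=
        measure_union_add_inter _ (measurableSet_toMeasurable _ _)
      rw [hUnion, measure_univ] at h1
      have h2 : 1 + μ (Bs ∩ Cs) ≤ 1 + 0 := by
        rw [add_zero, h1]; exact hBC
      exact le_antisymm ((ENNReal.add_le_add_iff_left ENNReal.one_ne_top).mp h2) (zero_le)
    refine measure_mono_null ?_ hinter
    intro ω hω
    exact ⟨hω.1, hsubC hω.2⟩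
  choose Bs hBmeas hBsub hBμ hBnull using hB
  -- integral of any function of σ
  have key : ∀ F : Equiv.Perm (Fin n) → ℝ, ∫ ω, F (σ ω) ∂μ
      = ∑ π : Equiv.Perm (Fin n), F π * ((Nat.factorial n : ℝ))⁻¹ := by
    intro F
    have hae : ∀ π : Equiv.Perm (Fin n), ∀ᵐ ω ∂μ,
        Set.indicator {ω' | σ ω' = π} (fun _ => F π) ω
          = Set.indicator (Bs π) (fun _ => F π) ω := by
      intro π
      rw [ae_iff]
      refine measure_mono_null (fun ω hω => ?_) (hBnull π)
      simp only [Set.mem_setOf_eq] at hω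
      by_cases h : σ ω = π
      · exact absurd (by
          rw [Set.indicator_of_mem (show ω ∈ {ω' | σ ω' = π} from h),
            Set.indicator_of_mem (hBsub π h)]) hω
      · constructor
        · by_contra hb
          exact hω (by
            rw [Set.indicator_of_notMem (show ω ∉ {ω' | σ ω' = π} from h),
              Set.indicator_of_notMem hb])
        · exact h
    have hfun : (fun ω => F (σ ω)) = fun ω => ∑ π : Equiv.Perm (Fin n),
        Set.indicator {ω' | σ ω' = π} (fun _ => F π) ω := by
      funext ω
      rw [Finset.sum_eq_single (σ ω)]
      · rw [Set.indicator_of_mem (show ω ∈ {ω' | σ ω' = σ ω} from rfl)]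
      · intro π _ hne
        rw [Set.indicator_of_notMem
          (show ω ∉ {ω' | σ ω' = π} from fun h => hne (Eq.symm h))]
      · intro h; exact absurd (Finset.mem_univ _) h
    rw [hfun]
    have h2 : ∫ ω, (∑ π : Equiv.Perm (Fin n),
          Set.indicator {ω' | σ ω' = π} (fun _ => F π) ω) ∂μ
        = ∫ ω, (∑ π : Equiv.Perm (Fin n), Set.indicator (Bs π) (fun _ => F π) ω) ∂μ := by
      apply integral_congr_ae
      filter_upwards [ae_all_iff.mpr hae] with ω hω
      exact Finset.sum_congr rfl fun π _ => hω π
    rw [h2, integral_finset_sum]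
    · refine Finset.sum_congr rfl fun π _ => ?_
      rw [integral_indicator_const (F π) (hBmeas π), measureReal_def, hBμ π, smul_eq_mul, mul_comm,
        ENNReal.toReal_inv]
      norm_num
    · intro π _
      rw [integrable_indicator_iff (hBmeas π)]
      apply (integrableOn_const_iff (C := F π)).mpr
      right
      rw [hBμ π]
      exact ENNReal.inv_lt_top.mpr (by exact_mod_cast Nat.factorial_pos n)
  -- the combinatorial core
  have hkey : (Nat.factorial n : ℝ) *
        ∑ π : Equiv.Perm (Fin n), f (fun i => x (π i)) * g (fun i => x (π i))
      ≤ (∑ π : Equiv.Perm (Fin n), f (fun i => x (π i)))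
          * ∑ π : Equiv.Perm (Fin n), g (fun i => x (π i)) := by
    have h := NAaux.key_comb n (Fin n) (Fin n) (le_of_eq (Fintype.card_fin n)) x S T hST f g hf hg hdf hdg
    have hcard : (Fintype.card (Fin n ≃ Fin n) : ℝ) = (Nat.factorial n : ℝ) := by
      rw [Fintype.card_equiv (Equiv.refl (Fin n)), Fintype.card_fin]
    rw [hcard] at h
    exact h
  have kfg : ∫ ω, f (fun i => x (σ ω i)) * g (fun i => x (σ ω i)) ∂μ
      = ∑ π : Equiv.Perm (Fin n),
          (f (fun i => x (π i)) * g (fun i => x (π i))) * ((Nat.factorial n : ℝ))⁻¹ :=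
    key (fun π => f (fun i => x (π i)) * g (fun i => x (π i)))
  have kf : ∫ ω, f (fun i => x (σ ω i)) ∂μ
      = ∑ π : Equiv.Perm (Fin n), f (fun i => x (π i)) * ((Nat.factorial n : ℝ))⁻¹ :=
    key (fun π => f (fun i => x (π i)))
  have kg : ∫ ω, g (fun i => x (σ ω i)) ∂μ
      = ∑ π : Equiv.Perm (Fin n), g (fun i => x (π i)) * ((Nat.factorial n : ℝ))⁻¹ :=
    key (fun π => g (fun i => x (π i)))
  rw [kfg, kf, kg, ← Finset.sum_mul, ← Finset.sum_mul, ← Finset.sum_mul]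
  set c : ℝ := ((Nat.factorial n : ℝ))⁻¹ with hc
  set P : ℝ := ∑ π : Equiv.Perm (Fin n), f (fun i => x (π i)) * g (fun i => x (π i)) with hP
  set Fs : ℝ := ∑ π : Equiv.Perm (Fin n), f (fun i => x (π i)) with hF
  set Gs : ℝ := ∑ π : Equiv.Perm (Fin n), g (fun i => x (π i)) with hG
  have c0 : (0:ℝ) ≤ c := by positivity
  have hcn : (Nat.factorial n : ℝ) * c = 1 := by
    rw [hc]
    exact mul_inv_cancel₀ (by exact_mod_cast (Nat.factorial_pos n).ne')
  have h7 : ((Nat.factorial n : ℝ) * P) * (c * c) ≤ (Fs * Gs) * (c * c) :=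
    mul_le_mul_of_nonneg_right hkey (mul_nonneg c0 c0)
  have h8 : ((Nat.factorial n : ℝ) * P) * (c * c) = P * c := by
    calc ((Nat.factorial n : ℝ) * P) * (c * c) = P * c * ((Nat.factorial n : ℝ) * c) := by ring
      _ = P * c := by rw [hcn, mul_one]
  have h9 : (Fs * Gs) * (c * c) = (Fs * c) * (Gs * c) := by ring
  rw [h8, h9] at h7
  exact h7


/-- a uniformly random permutation of fixed values `x 1, …, x n` yields
negatively associated coordinates. -/
theorem permutation_distribution_NA
    {Ω : Type*} [MeasurableSpace Ω] (μ : Measure Ω) [IsProbabilityMeasure μ]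
    (n : ℕ) (x : Fin n → ℝ) (σ : Ω → Equiv.Perm (Fin n))
    (hσ : ∀ π : Equiv.Perm (Fin n), μ {ω | σ ω = π} = ((Nat.factorial n : ENNReal))⁻¹) :
    NegAssoc μ (fun (i : Fin n) (ω : Ω) => x (σ ω i)) := by
  intro S T hST f g hf hg hdf hdg
  exact permutation_distribution_NA' μ n x σ hσ S T hST f g hf hg hdf hdg
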